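/- Let 0 < s < 1/2, let g : (0,∞) → [0,∞) be nonincreasing, and suppose there exist C > 0 and x₀ > 0 such that (g(2x/3) - g(4x/3))·x^{1-2s} ≤ C for all 0 < x ≤ x₀. Then there exists C' > 0 such that g(z) ≤ C'·z^{-(1-2s)} for all 0 < z ≤ 2x₀/3. -/

import Mathlib

lemma dyadic_aux_ratio (A : ℝ) (hA : 1 < A) : A / (A - 1) * A⁻¹ + 1 = A / (A - 1) := by
  have h1 : A ≠ 0 := by linarith
  have h2 : A - 1 ≠ 0 := by intro h; rw [sub_eq_zero] at h; linarith
  field_simp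
  ring

theorem dyadic_singularity_estimate (s : ℝ) (hs0 : 0 < s) (hs1 : s < 1 / 2)
    (g : ℝ → ℝ) (hgpos : ∀ x, 0 < x → 0 ≤ g x)
    (hgmono : AntitoneOn g (Set.Ioi 0))
    (C x₀ : ℝ) (hC : 0 < C) (hx₀ : 0 < x₀)
    (hkey : ∀ x : ℝ, 0 < x → x ≤ x₀ → (g (2 * x / 3) - g (4 * x / 3)) * x ^ (1 - 2 * s) ≤ C) :
    ∃ C' : ℝ, 0 < C' ∧ ∀ z : ℝ, 0 < z → z ≤ 2 * x₀ / 3 → g z ≤ C' * z ^ (-(1 - 2 * s)) := by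
  classical
  set α : ℝ := 1 - 2 * s with hα
  have hα0 : 0 < α := by rw [hα]; linarith
  have h2α : (1:ℝ) < (2:ℝ) ^ α :=
    (Real.one_lt_rpow_iff_of_pos (by norm_num)).mpr (Or.inl ⟨by norm_num, hα0⟩)
  set D : ℝ := (2:ℝ) ^ α / ((2:ℝ) ^ α - 1) with hD
  have hDpos : 0 < D := div_pos (by linarith) (by linarith)
  have hDeq : D * (2:ℝ) ^ (-α) + 1 = D := by
    rw [Real.rpow_neg (by norm_num : (0:ℝ) ≤ 2), hD]
    exact dyadic_aux_ratio _ h2α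
  -- dyadic induction
  have hind : ∀ n : ℕ, g (2 * (x₀ / 2 ^ n) / 3) ≤ g (2 * x₀ / 3) + C * D * (x₀ / 2 ^ n) ^ (-α) := by
    intro n
    induction n with
    | zero =>
      have h1 : (0:ℝ) < C * D * (x₀ / 2 ^ 0) ^ (-α) := by positivity
      have : (x₀ / 2 ^ 0 : ℝ) = x₀ := by norm_num
      rw [this] at h1 ⊢
      linarith
    | succ k ih =>
      set x : ℝ := x₀ / 2 ^ k with hxdef
      have hxpos : 0 < x := by positivity
      have hx2pos : 0 < x / 2 := by positivity
      have hx2le : x / 2 ≤ x₀ := by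
        rw [hxdef]
        rw [div_div]
        apply div_le_self hx₀.le
        have : (1:ℝ) ≤ 2 ^ k := one_le_pow₀ (by norm_num)
        linarith
      have hx' : x₀ / 2 ^ (k + 1) = x / 2 := by
        rw [hxdef, pow_succ, div_div]
      have hkey' := hkey (x / 2) hx2pos hx2le
      have hpow : (0:ℝ) < (x / 2) ^ α := Real.rpow_pos_of_pos hx2pos α
      have hsub : g (2 * (x / 2) / 3) - g (4 * (x / 2) / 3) ≤ C * (x / 2) ^ (-α) := by
        rw [Real.rpow_neg hx2pos.le, mul_comm C]
        rw [← div_eq_inv_mul, le_div_iff₀ hpow]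
        exact hkey'
      have heq : 4 * (x / 2) / 3 = 2 * x / 3 := by ring
      rw [heq] at hsub
      have hmul : x ^ (-α) = (x / 2) ^ (-α) * (2:ℝ) ^ (-α) := by
        rw [← Real.mul_rpow (by positivity) (by norm_num), div_mul_cancel₀]
        norm_num
      have hcomb : C * D * x ^ (-α) + C * (x / 2) ^ (-α) = C * D * (x / 2) ^ (-α) := by
        rw [hmul]
        linear_combination C * (x / 2) ^ (-α) * hDeq
      have h2x : 2 * (x₀ / 2 ^ (k + 1)) / 3 = 2 * (x / 2) / 3 := by rw [hx']
      rw [h2x, hx']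
      linarith [ih, hsub]
  -- choose the dyadic scale for z
  refine ⟨g (2 * x₀ / 3) * (2 * x₀ / 3) ^ α + C * D * ((3:ℝ) / 4) ^ (-α), ?_, ?_⟩
  · have h1 : 0 ≤ g (2 * x₀ / 3) * (2 * x₀ / 3) ^ α := by
      apply mul_nonneg (hgpos _ (by positivity)) (Real.rpow_pos_of_pos (by positivity) α).le
    have h2 : 0 < C * D * ((3:ℝ) / 4) ^ (-α) := by
      apply mul_pos (mul_pos hC hDpos) (Real.rpow_pos_of_pos (by norm_num) _)
    linarith
  · intro z hz hzle
    have hz3 : 3 * z / 2 ≤ x₀ := by linarith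
    have hex : ∃ n : ℕ, x₀ / 2 ^ n < 3 * z / 2 := by
      obtain ⟨n, hn⟩ := exists_pow_lt_of_lt_one (x := 3 * z / (2 * x₀)) (y := (1:ℝ)/2)
        (by positivity) (by norm_num)
      refine ⟨n, ?_⟩
      have e1 : x₀ / 2 ^ n = x₀ * ((1:ℝ)/2) ^ n := by
        rw [one_div, inv_pow, div_eq_mul_inv]
      have e2 : x₀ * (3 * z / (2 * x₀)) = 3 * z / 2 := by
        field_simp
      calc x₀ / 2 ^ n = x₀ * ((1:ℝ)/2) ^ n := e1
        _ < x₀ * (3 * z / (2 * x₀)) := by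
            exact mul_lt_mul_of_pos_left hn hx₀
        _ = 3 * z / 2 := e2
    set m : ℕ := Nat.find hex with hm
    have hmlt : x₀ / 2 ^ m < 3 * z / 2 := Nat.find_spec hex
    have hm0 : m ≠ 0 := by
      intro h0
      have := hmlt
      rw [h0] at this
      simp at this
      linarith
    obtain ⟨k, hk⟩ := Nat.exists_eq_succ_of_ne_zero hm0
    have hprev : ¬ (x₀ / 2 ^ k < 3 * z / 2) := Nat.find_min hex (by omega)
    push_neg at hprev
    set x : ℝ := x₀ / 2 ^ m with hxdef
    have hxpos : 0 < x := by positivity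
    have hx2 : x₀ / 2 ^ k = 2 * x := by
      rw [hxdef, hk, pow_succ]
      field_simp
    rw [hx2] at hprev
    -- 2x/3 ≤ z and 3z/4 ≤ x
    have hzx : 2 * x / 3 ≤ z := by linarith
    have hxz : 3 * z / 4 ≤ x := by linarith
    have hgz : g z ≤ g (2 * x / 3) := by
      apply hgmono (by simp [Set.mem_Ioi]; positivity) (Set.mem_Ioi.mpr hz) hzx
    have hbound := hind m
    rw [← hxdef] at hbound
    have hxrpow : x ^ (-α) ≤ (3 * z / 4) ^ (-α) :=
      Real.rpow_le_rpow_of_nonpos (by positivity) hxz (by linarith)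
    have hsplit : (3 * z / 4 : ℝ) ^ (-α) = ((3:ℝ)/4) ^ (-α) * z ^ (-α) := by
      rw [← Real.mul_rpow (by norm_num) hz.le]
      ring_nf
    have hone : 1 ≤ (2 * x₀ / 3) ^ α * z ^ (-α) := by
      have h1 : (2 * x₀ / 3 : ℝ) ^ (-α) ≤ z ^ (-α) :=
        Real.rpow_le_rpow_of_nonpos hz hzle (by linarith)
      have h2 : (2 * x₀ / 3 : ℝ) ^ α * (2 * x₀ / 3 : ℝ) ^ (-α) = 1 := by
        rw [← Real.rpow_add (by positivity)]
        simp
      calc (1:ℝ) = (2 * x₀ / 3) ^ α * (2 * x₀ / 3) ^ (-α) := h2.symm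
        _ ≤ (2 * x₀ / 3) ^ α * z ^ (-α) := by
            apply mul_le_mul_of_nonneg_left h1 (Real.rpow_pos_of_pos (by positivity) α).le
    have hg0 : g (2 * x₀ / 3) ≤ g (2 * x₀ / 3) * ((2 * x₀ / 3) ^ α * z ^ (-α)) :=
      le_mul_of_one_le_right (hgpos _ (by positivity)) hone
    have hCD : C * D * x ^ (-α) ≤ C * D * (((3:ℝ)/4) ^ (-α) * z ^ (-α)) := by
      rw [← hsplit]
      exact mul_le_mul_of_nonneg_left hxrpow (by positivity)
    calc g z ≤ g (2 * x / 3) := hgz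
      _ ≤ g (2 * x₀ / 3) + C * D * x ^ (-α) := hbound
      _ ≤ g (2 * x₀ / 3) * ((2 * x₀ / 3) ^ α * z ^ (-α)) + C * D * (((3:ℝ)/4) ^ (-α) * z ^ (-α)) := by
          linarith
      _ = (g (2 * x₀ / 3) * (2 * x₀ / 3) ^ α + C * D * ((3:ℝ)/4) ^ (-α)) * z ^ (-α) := by ring
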